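/- Finite-time collapse of two aggregates: let a : ℝ → ℝ be continuous, odd, nondecreasing, with a(s) > 0 for all s > 0, and A(x) = ∫_0^x a(s) ds. Let m_1, m_2 > 0 and let x_1, x_2 : [0,T] → ℝ be C¹ with x_1(t) < x_2(t) for all t ∈ [0,T], satisfying m_1 x_1'(t) = A(d_1(t) + m_1/2) − A(d_1(t) − m_1/2) and m_2 x_2'(t) = A(d_2(t) + m_2/2) − A(d_2(t) − m_2/2), where d_1(t) = (m_2/2) e^{x_1(t) − x_2(t)} and d_2(t) = −(m_1/2) e^{x_1(t) − x_2(t)}. Set g(t) = x_2(t) − x_1(t), v_1 = (1/m_1)[A(d_1(0) + m_1/2) − A(d_1(0) − m_1/2)] and v_2 = (1/m_2)[A(d_2(0) + m_2/2) − A(d_2(0) − m_2/2)]. Then v_1 − v_2 > 0 and g(t) ≤ g(0) − t·(v_1 − v_2) for all t ∈ [0,T]; in particular necessarily T ≤ g(0)/(v_1 − v_2), i.e. the two aggregates must collide no later than time g(0)/(v_1 − v_2). -/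

import Mathlib

open MeasureTheory intervalIntegral

section helpers
variable {a : ℝ → ℝ}

/-- The antiderivative `A(x) = ∫_0^x a(s) ds`. -/
noncomputable def Aanti (a : ℝ → ℝ) (x : ℝ) : ℝ := ∫ s in (0:ℝ)..x, a s

lemma a_zero (haodd : ∀ s, a (-s) = -a s) : a 0 = 0 := by
  have := haodd 0; simp only [neg_zero] at this; linarith

lemma A_even (ha : Continuous a) (haodd : ∀ s, a (-s) = -a s) (x : ℝ) :
    Aanti a (-x) = Aanti a x := by
  have h : (∫ s in (0:ℝ)..x, a (-s)) = ∫ s in (-x)..(-(0:ℝ)), a s :=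
    intervalIntegral.integral_comp_neg a
  simp only [neg_zero] at h
  have h2 : (∫ s in (0:ℝ)..x, a (-s)) = ∫ s in (0:ℝ)..x, -(a s) := by
    congr 1; ext s; exact haodd s
  rw [intervalIntegral.integral_neg] at h2
  have h3 : (∫ s in (-x)..(0:ℝ), a s) = -∫ s in (0:ℝ)..(-x), a s :=
    (intervalIntegral.integral_symm _ _)
  unfold Aanti
  rw [h2, h3] at h
  linarith

lemma A_diff (ha : Continuous a) (c r : ℝ) :
    Aanti a (c + r) - Aanti a (c - r) = ∫ s in (c - r)..(c + r), a s := by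
  have := intervalIntegral.integral_add_adjacent_intervals (μ := volume)
    (ha.intervalIntegrable 0 (c - r)) (ha.intervalIntegrable (c - r) (c + r))
  unfold Aanti
  linarith

lemma G_mono (ha : Continuous a) (hamono : Monotone a) {c c' r : ℝ} (hcc : c ≤ c') (hr : 0 ≤ r) :
    (∫ s in (c - r)..(c + r), a s) ≤ ∫ s in (c' - r)..(c' + r), a s := by
  have key : (∫ s in (c - r)..(c + r), a (s + (c' - c))) = ∫ s in (c' - r)..(c' + r), a s := by
    rw [intervalIntegral.integral_comp_add_right]
    ring_nf
  rw [← key]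
  refine intervalIntegral.integral_mono_on (by linarith)
    (ha.intervalIntegrable _ _) ((ha.comp (by continuity)).intervalIntegrable _ _) ?_
  intro s _
  exact hamono (by linarith)

lemma G_pos (ha : Continuous a) (haodd : ∀ s, a (-s) = -a s)
    (hamono : Monotone a) (hapos : ∀ s > (0:ℝ), 0 < a s)
    {c r : ℝ} (hc : 0 < c) (hr : 0 < r) :
    0 < ∫ s in (c - r)..(c + r), a s := by
  have hshiftc : Continuous fun s : ℝ => a (s + 2 * r) := ha.comp (by continuity)
  have hφc : Continuous fun s : ℝ => a (s + 2 * r) - a s := hshiftc.sub ha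
  -- ∫_{-r}^{r} a = 0
  have hodd0 : (∫ s in (-r)..r, a s) = 0 := by
    have h : (∫ s in (-r)..r, a (-s)) = ∫ s in (-r)..(- -r), a s :=
      intervalIntegral.integral_comp_neg a
    simp only [neg_neg] at h
    have h2 : (∫ s in (-r)..r, a (-s)) = -∫ s in (-r)..r, a s := by
      rw [show (fun s => a (-s)) = fun s => -(a s) from funext haodd,
        intervalIntegral.integral_neg]
    linarith
  -- rewrite as shifted difference
  have hsplit1 : (∫ s in (c - r)..(c + r), a s)
      = (∫ s in (c - r)..r, a s) + ∫ s in r..(c + r), a s :=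
    (intervalIntegral.integral_add_adjacent_intervals
      (ha.intervalIntegrable _ _) (ha.intervalIntegrable _ _)).symm
  have hsplit2 : (∫ s in (-r)..r, a s)
      = (∫ s in (-r)..(c - r), a s) + ∫ s in (c - r)..r, a s :=
    (intervalIntegral.integral_add_adjacent_intervals
      (ha.intervalIntegrable _ _) (ha.intervalIntegrable _ _)).symm
  have hshift : (∫ s in (-r)..(c - r), a (s + 2 * r)) = ∫ s in r..(c + r), a s := by
    rw [intervalIntegral.integral_comp_add_right]
    ring_nf
  have hphi : (∫ s in (-r)..(c - r), (a (s + 2 * r) - a s))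
      = (∫ s in r..(c + r), a s) - ∫ s in (-r)..(c - r), a s := by
    rw [intervalIntegral.integral_sub (hshiftc.intervalIntegrable _ _)
      (ha.intervalIntegrable _ _), hshift]
  have hmain : (∫ s in (c - r)..(c + r), a s)
      = ∫ s in (-r)..(c - r), (a (s + 2 * r) - a s) := by
    rw [hphi]; linarith
  rw [hmain]
  -- split at m = min 0 (c - r)
  set m : ℝ := min 0 (c - r) with hm
  have hm1 : -r < m := by
    rcases le_or_gt 0 (c - r) with h | h
    · rw [hm, min_eq_left h]; linarith
    · rw [hm, min_eq_right h.le]; linarith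
  have hm2 : m ≤ c - r := min_le_right _ _
  have hm3 : m ≤ 0 := min_le_left _ _
  have hsplit3 : (∫ s in (-r)..(c - r), (a (s + 2 * r) - a s))
      = (∫ s in (-r)..m, (a (s + 2 * r) - a s)) + ∫ s in m..(c - r), (a (s + 2 * r) - a s) :=
    (intervalIntegral.integral_add_adjacent_intervals
      (hφc.intervalIntegrable _ _) (hφc.intervalIntegrable _ _)).symm
  have ha0 : a 0 = 0 := a_zero haodd
  have hpos1 : 0 < ∫ s in (-r)..m, (a (s + 2 * r) - a s) := by
    refine intervalIntegral_pos_of_pos_on (hφc.intervalIntegrable _ _) ?_ hm1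
    intro s hs
    have hs1 : -r < s := hs.1
    have hs2 : s < m := hs.2
    have h1 : a r ≤ a (s + 2 * r) := hamono (by linarith)
    have h2 : a s ≤ a 0 := hamono (by linarith)
    have h3 : 0 < a r := hapos r hr
    show (0:ℝ) < a (s + 2 * r) - a s
    linarith
  have hpos2 : 0 ≤ ∫ s in m..(c - r), (a (s + 2 * r) - a s) := by
    refine intervalIntegral.integral_nonneg hm2 ?_
    intro s _
    have : a s ≤ a (s + 2 * r) := hamono (by linarith)
    show (0:ℝ) ≤ a (s + 2 * r) - a s
    linarith
  linarith

end helpers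

/-- Finite-time collapse of two aggregates: for the two-aggregate ODE system with a
continuous, odd, nondecreasing velocity law `a` positive on positive reals, the gap
`g(t) = x₂(t) - x₁(t)` satisfies `g(t) ≤ g(0) - t (v₁ - v₂)` with `v₁ - v₂ > 0`; in
particular the two aggregates must collide no later than time `g(0)/(v₁ - v₂)`, so
necessarily `T ≤ g(0)/(v₁ - v₂)`. -/
theorem stmt15 (a : ℝ → ℝ) (ha : Continuous a) (haodd : ∀ s, a (-s) = -a s)
    (hamono : Monotone a) (hapos : ∀ s > (0:ℝ), 0 < a s)
    (m₁ m₂ T : ℝ) (hm₁ : 0 < m₁) (hm₂ : 0 < m₂) (hT : 0 < T)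
    (x₁ x₂ : ℝ → ℝ) (hreg₁ : ContDiff ℝ 1 x₁) (hreg₂ : ContDiff ℝ 1 x₂)
    (horder : ∀ t ∈ Set.Icc (0:ℝ) T, x₁ t < x₂ t)
    (d₁ d₂ : ℝ → ℝ)
    (hd₁ : d₁ = fun t => (m₂ / 2) * Real.exp (x₁ t - x₂ t))
    (hd₂ : d₂ = fun t => -(m₁ / 2) * Real.exp (x₁ t - x₂ t))
    (hode₁ : ∀ t ∈ Set.Icc (0:ℝ) T,
      m₁ * deriv x₁ t = Aanti a (d₁ t + m₁ / 2) - Aanti a (d₁ t - m₁ / 2))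
    (hode₂ : ∀ t ∈ Set.Icc (0:ℝ) T,
      m₂ * deriv x₂ t = Aanti a (d₂ t + m₂ / 2) - Aanti a (d₂ t - m₂ / 2))
    (v₁ v₂ : ℝ)
    (hv₁ : v₁ = (1 / m₁) * (Aanti a (d₁ 0 + m₁ / 2) - Aanti a (d₁ 0 - m₁ / 2)))
    (hv₂ : v₂ = (1 / m₂) * (Aanti a (d₂ 0 + m₂ / 2) - Aanti a (d₂ 0 - m₂ / 2))) :
    0 < v₁ - v₂ ∧
    (∀ t ∈ Set.Icc (0:ℝ) T, x₂ t - x₁ t ≤ (x₂ 0 - x₁ 0) - t * (v₁ - v₂)) ∧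
    T ≤ (x₂ 0 - x₁ 0) / (v₁ - v₂) := by
  have hIcc0 : (0:ℝ) ∈ Set.Icc (0:ℝ) T := ⟨le_rfl, hT.le⟩
  set g : ℝ → ℝ := fun t => x₂ t - x₁ t with hg
  have hdx₁ : Differentiable ℝ x₁ := hreg₁.differentiable one_ne_zero
  have hdx₂ : Differentiable ℝ x₂ := hreg₂.differentiable one_ne_zero
  have hdg : Differentiable ℝ g := hdx₂.sub hdx₁
  have hderivg : ∀ t, deriv g t = deriv x₂ t - deriv x₁ t := fun t =>
    deriv_sub (hdx₂ t) (hdx₁ t)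
  set E : ℝ → ℝ := fun t => Real.exp (x₁ t - x₂ t) with hE
  have hEpos : ∀ t, 0 < E t := fun t => Real.exp_pos _
  set P : ℝ → ℝ := fun t =>
    (∫ s in ((m₂/2) * E t - m₁/2)..((m₂/2) * E t + m₁/2), a s) / m₁
    + (∫ s in ((m₁/2) * E t - m₂/2)..((m₁/2) * E t + m₂/2), a s) / m₂ with hP
  have hPpos : ∀ t, 0 < P t := by
    intro t
    have h1 : 0 < ∫ s in ((m₂/2) * E t - m₁/2)..((m₂/2) * E t + m₁/2), a s :=
      G_pos ha haodd hamono hapos (by positivity) (by positivity)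
    have h2 : 0 < ∫ s in ((m₁/2) * E t - m₂/2)..((m₁/2) * E t + m₂/2), a s :=
      G_pos ha haodd hamono hapos (by positivity) (by positivity)
    have := div_pos h1 hm₁
    have := div_pos h2 hm₂
    simp only [hP]
    linarith
  -- rewrite the ODE right-hand sides
  have key : ∀ t ∈ Set.Icc (0:ℝ) T,
      (Aanti a (d₁ t + m₁ / 2) - Aanti a (d₁ t - m₁ / 2)
        = ∫ s in ((m₂/2) * E t - m₁/2)..((m₂/2) * E t + m₁/2), a s)
      ∧ (Aanti a (d₂ t + m₂ / 2) - Aanti a (d₂ t - m₂ / 2)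
        = -∫ s in ((m₁/2) * E t - m₂/2)..((m₁/2) * E t + m₂/2), a s) := by
    intro t ht
    constructor
    · have hrw : d₁ t = (m₂/2) * E t := by rw [hd₁]
      rw [hrw, A_diff ha]
    · have hrw1 : d₂ t + m₂ / 2 = -((m₁/2) * E t - m₂/2) := by rw [hd₂]; simp [hE]; ring
      have hrw2 : d₂ t - m₂ / 2 = -((m₁/2) * E t + m₂/2) := by rw [hd₂]; simp [hE]; ring
      rw [hrw1, hrw2, A_even ha haodd, A_even ha haodd, ← A_diff ha]
      ring
  have hderivgP : ∀ t ∈ Set.Icc (0:ℝ) T, deriv g t = -P t := by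
    intro t ht
    have h1 := hode₁ t ht
    have h2 := hode₂ t ht
    rw [(key t ht).1] at h1
    rw [(key t ht).2] at h2
    rw [hderivg t]
    have e1 : deriv x₁ t = (∫ s in ((m₂/2) * E t - m₁/2)..((m₂/2) * E t + m₁/2), a s) / m₁ := by
      rw [eq_div_iff hm₁.ne']; linarith
    have e2 : deriv x₂ t
        = -((∫ s in ((m₁/2) * E t - m₂/2)..((m₁/2) * E t + m₂/2), a s) / m₂) := by
      rw [← neg_div, eq_div_iff hm₂.ne']
      linarith
    rw [e1, e2]
    simp only [hP]
    ring
  have hganti : AntitoneOn g (Set.Icc (0:ℝ) T) := by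
    apply antitoneOn_of_deriv_nonpos (convex_Icc 0 T) hdg.continuous.continuousOn
      hdg.differentiableOn
    intro t ht
    rw [interior_Icc] at ht
    rw [hderivgP t ⟨ht.1.le, ht.2.le⟩]
    linarith [hPpos t]
  have hEmono : ∀ t ∈ Set.Icc (0:ℝ) T, E 0 ≤ E t := by
    intro t ht
    have hgle : g t ≤ g 0 := hganti hIcc0 ht ht.1
    have : x₁ 0 - x₂ 0 ≤ x₁ t - x₂ t := by simp only [hg] at hgle; linarith
    exact Real.exp_le_exp.mpr this
  have hPmono : ∀ t ∈ Set.Icc (0:ℝ) T, P 0 ≤ P t := by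
    intro t ht
    have hc1 : (m₂/2) * E 0 ≤ (m₂/2) * E t :=
      mul_le_mul_of_nonneg_left (hEmono t ht) (by positivity)
    have hc2 : (m₁/2) * E 0 ≤ (m₁/2) * E t :=
      mul_le_mul_of_nonneg_left (hEmono t ht) (by positivity)
    have hG1 := G_mono ha hamono hc1 (by positivity : (0:ℝ) ≤ m₁/2)
    have hG2 := G_mono ha hamono hc2 (by positivity : (0:ℝ) ≤ m₂/2)
    simp only [hP]
    gcongr
  have hvP : v₁ - v₂ = P 0 := by
    have h1 := (key 0 hIcc0).1
    have h2 := (key 0 hIcc0).2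
    rw [hv₁, hv₂, h1, h2]
    simp only [hP]
    field_simp
    ring
  have hfirst : 0 < v₁ - v₂ := by rw [hvP]; exact hPpos 0
  have hmain : ∀ t ∈ Set.Icc (0:ℝ) T, g t ≤ g 0 - t * (v₁ - v₂) := by
    have hdh : Differentiable ℝ (fun t => g t + t * (v₁ - v₂)) := by
      exact hdg.add (by fun_prop)
    have hanti : AntitoneOn (fun t => g t + t * (v₁ - v₂)) (Set.Icc (0:ℝ) T) := by
      apply antitoneOn_of_deriv_nonpos (convex_Icc 0 T) hdh.continuous.continuousOn
        hdh.differentiableOn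
      intro t ht
      rw [interior_Icc] at ht
      have ht' : t ∈ Set.Icc (0:ℝ) T := ⟨ht.1.le, ht.2.le⟩
      rw [deriv_fun_add (hdg t) (by fun_prop)]
      have : deriv (fun t => t * (v₁ - v₂)) t = v₁ - v₂ := by
        simp
      rw [this, hderivgP t ht', hvP]
      linarith [hPmono t ht']
    intro t ht
    have := hanti hIcc0 ht ht.1
    simp only at this
    linarith
  refine ⟨hfirst, ?_, ?_⟩
  · intro t ht
    have := hmain t ht
    simp only [hg] at this
    linarith
  · have hgT : 0 < g T := by
      have := horder T ⟨hT.le, le_rfl⟩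
      simp only [hg]; linarith
    have := hmain T ⟨hT.le, le_rfl⟩
    rw [le_div_iff₀ hfirst]
    simp only [hg] at this hgT
    nlinarith
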